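/- For every f ∈ ℝ^N with Σ_{k=1}^{N} f_k = ρ, the right-hand side of the discrete δ system conserves mass: Σ_{j=1}^{N} Q_j(f) = 0. -/

import Mathlib

/-- Right-hand side of the discrete δ system on the velocity cells `1,…,N`:
for `1 ≤ j ≤ N−1`,
`Q_j(f) = η[(1−P)f_j² + 2(1−P)f_j Σ_{k=j+1}^{N} f_k + Pρ f_{j−r} 𝟙_{j>r} − f_j Σ_{k=1}^{N} f_k]`,
and
`Q_N(f) = η[(1−P)f_N² + Pρ Σ_{h=N−r}^{N} f_h − f_N Σ_{k=1}^{N} f_k]`. -/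
noncomputable def Qdelta (η P ρ : ℝ) (r N : ℕ) (f : ℕ → ℝ) (j : ℕ) : ℝ :=
  if j = N then
    η * ((1 - P) * f N ^ 2 + P * ρ * (∑ h ∈ Finset.Icc (N - r) N, f h)
      - f N * ∑ k ∈ Finset.Icc 1 N, f k)
  else
    η * ((1 - P) * f j ^ 2 + 2 * (1 - P) * f j * (∑ k ∈ Finset.Icc (j + 1) N, f k)
      + (if r < j then P * ρ * f (j - r) else 0)
      - f j * ∑ k ∈ Finset.Icc 1 N, f k)

lemma sq_expand (f : ℕ → ℝ) :
    ∀ n a : ℕ, ∑ j ∈ Finset.Icc a n,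
      (f j ^ 2 + 2 * f j * ∑ k ∈ Finset.Icc (j + 1) n, f k)
      = (∑ k ∈ Finset.Icc a n, f k) ^ 2 := by
  intro n
  induction n with
  | zero =>
    intro a
    match a with
    | 0 => simp
    | a + 1 => simp
  | succ n ih =>
    intro a
    by_cases ha : a ≤ n + 1
    · rw [Finset.sum_Icc_succ_top ha, Finset.sum_Icc_succ_top ha]
      have h1 : ∀ j ∈ Finset.Icc a n,
          (f j ^ 2 + 2 * f j * ∑ k ∈ Finset.Icc (j + 1) (n + 1), f k)
          = (f j ^ 2 + 2 * f j * ∑ k ∈ Finset.Icc (j + 1) n, f k) + 2 * f j * f (n + 1) := by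
        intro j hj
        have hj' := Finset.mem_Icc.mp hj
        rw [Finset.sum_Icc_succ_top (by omega : j + 1 ≤ n + 1)]
        ring
      rw [Finset.sum_congr rfl h1, Finset.sum_add_distrib, ih a]
      have h2 : ∑ j ∈ Finset.Icc a n, 2 * f j * f (n + 1)
          = 2 * (∑ j ∈ Finset.Icc a n, f j) * f (n + 1) := by
        rw [Finset.mul_sum, Finset.sum_mul]
      rw [h2, Finset.Icc_eq_empty (by omega : ¬ n + 1 + 1 ≤ n + 1)]
      simp
      ring
    · rw [Finset.Icc_eq_empty (by omega : ¬ a ≤ n + 1)]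
      simp

/-- For every `f ∈ ℝ^N` with `Σ_{k=1}^{N} f_k = ρ`, the right-hand side of the
discrete δ system conserves mass: `Σ_{j=1}^{N} Q_j(f) = 0`. -/
theorem statement10 (Vmax Δv η P ρ : ℝ) (T r N : ℕ) (hT : 1 ≤ T) (hr : 1 ≤ r)
    (hV : 0 < Vmax) (hΔv : Δv = Vmax / (T : ℝ)) (hN : N = r * T + 1)
    (hρ : 0 < ρ) (hη : 0 < η) (hP0 : 0 ≤ P) (hP1 : P ≤ 1)
    (f : ℕ → ℝ) (hmass : ∑ k ∈ Finset.Icc 1 N, f k = ρ) :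
    ∑ j ∈ Finset.Icc 1 N, Qdelta η P ρ r N f j = 0 := by
  have hrT : r ≤ r * T := Nat.le_mul_of_pos_right r (by omega)
  have hrN : r + 1 ≤ N := by omega
  obtain ⟨M, hM⟩ : ∃ M, N = M + 1 := ⟨N - 1, by omega⟩
  subst hM
  have hrM : r ≤ M := by omega
  -- split off the top term
  rw [Finset.sum_Icc_succ_top (by omega : 1 ≤ M + 1)]
  -- the top term
  have htop : Qdelta η P ρ r (M + 1) f (M + 1)
      = η * ((1 - P) * f (M + 1) ^ 2
        + P * ρ * (∑ h ∈ Finset.Icc (M + 1 - r) (M + 1), f h)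
        - f (M + 1) * ρ) := by
    simp only [Qdelta, hmass, if_pos rfl, if_true]
  -- the lower terms
  have hlow : ∀ j ∈ Finset.Icc 1 M, Qdelta η P ρ r (M + 1) f j
      = η * (1 - P) * (f j ^ 2 + 2 * f j * ∑ k ∈ Finset.Icc (j + 1) (M + 1), f k)
        + η * (if r < j then P * ρ * f (j - r) else 0)
        - η * ρ * f j := by
    intro j hj
    have hj' := Finset.mem_Icc.mp hj
    simp only [Qdelta, if_neg (by omega : ¬ j = M + 1), hmass]
    ring
  rw [Finset.sum_congr rfl hlow, htop]
  rw [Finset.sum_sub_distrib, Finset.sum_add_distrib, ← Finset.mul_sum, ← Finset.mul_sum,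
    ← Finset.mul_sum]
  -- quadratic part
  have hG : ∑ j ∈ Finset.Icc 1 M,
      (f j ^ 2 + 2 * f j * ∑ k ∈ Finset.Icc (j + 1) (M + 1), f k)
      = ρ ^ 2 - f (M + 1) ^ 2 := by
    have := sq_expand f (M + 1) 1
    rw [Finset.sum_Icc_succ_top (by omega : 1 ≤ M + 1), hmass,
      Finset.Icc_eq_empty (by omega : ¬ M + 1 + 1 ≤ M + 1)] at this
    simp at this
    linarith
  -- the shifted sum
  have hH : ∑ j ∈ Finset.Icc 1 M, (if r < j then P * ρ * f (j - r) else 0)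
      = P * ρ * ∑ i ∈ Finset.Icc 1 (M - r), f i := by
    rw [← Finset.sum_subset (Finset.Icc_subset_Icc_left (by omega : 1 ≤ r + 1))
      (by intro x hx hx'; simp only [Finset.mem_Icc] at hx;
          rw [if_neg (by simp only [Finset.mem_Icc] at hx'; omega)])]
    have h1 : ∀ j ∈ Finset.Icc (r + 1) M,
        (if r < j then P * ρ * f (j - r) else 0) = P * ρ * f (j - r) := by
      intro j hj
      have := Finset.mem_Icc.mp hj
      rw [if_pos (by omega)]
    rw [Finset.sum_congr rfl h1, Finset.mul_sum]
    have hmap : Finset.Icc (r + 1) M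
        = (Finset.Icc 1 (M - r)).map (addRightEmbedding r) := by
      rw [Finset.map_add_right_Icc]
      congr 1 <;> omega
    rw [hmap, Finset.sum_map]
    apply Finset.sum_congr rfl
    intro i hi
    simp [addRightEmbedding]
  -- tail sum
  have htail : ∑ i ∈ Finset.Icc 1 (M - r), f i
      + ∑ h ∈ Finset.Icc (M + 1 - r) (M + 1), f h = ρ := by
    have h1 : Finset.Icc 1 (M - r) = Finset.Ioc 0 (M - r) := by
      rw [← Finset.Icc_add_one_left_eq_Ioc]; simp
    have h2 : Finset.Icc (M + 1 - r) (M + 1) = Finset.Ioc (M - r) (M + 1) := by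
      rw [← Finset.Icc_add_one_left_eq_Ioc]; congr 1; omega
    have h3 : Finset.Icc 1 (M + 1) = Finset.Ioc 0 (M + 1) := by
      rw [← Finset.Icc_add_one_left_eq_Ioc]; simp
    rw [h1, h2, Finset.sum_Ioc_consecutive f (by omega) (by omega), ← h3, hmass]
  -- lower sum of f
  have hD : ∑ j ∈ Finset.Icc 1 M, f j = ρ - f (M + 1) := by
    have := Finset.sum_Icc_succ_top (by omega : 1 ≤ M + 1) f
    rw [hmass] at this
    linarith
  have h2 : ∑ h ∈ Finset.Icc (M + 1 - r) (M + 1), f h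
      = ρ - ∑ i ∈ Finset.Icc 1 (M - r), f i := by linarith
  rw [hG, hH, hD, h2]
  ring
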